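/- Let κ = (κ₁,…,κₙ) ∈ ℝⁿ with n ≥ 2, H = Σⱼ κⱼ, K = Σ_{j<k} κⱼκₖ, and for each i let λᵢ = H − κᵢ = Σ_{j≠i} κⱼ. Then for every i, H·λᵢ ≥ K + (n/(2(n-1))) λᵢ². -/
import Mathlib


open Finset

lemma huang_wu_pair_sum (n : ℕ) (κ : Fin n → ℝ) :
    2 * (∑ p ∈ univ.filter (fun p : Fin n × Fin n => p.1 < p.2), κ p.1 * κ p.2)
      + ∑ j, (κ j) ^ 2 = (∑ j, κ j) ^ 2 := by
  have hsq : (∑ j, κ j) ^ 2 = ∑ p : Fin n × Fin n, κ p.1 * κ p.2 := by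
    rw [sq, Finset.sum_mul_sum, ← Finset.univ_product_univ, Finset.sum_product]
  have hsplit := Finset.sum_filter_add_sum_filter_not Finset.univ
    (fun p : Fin n × Fin n => p.1 < p.2) (fun p => κ p.1 * κ p.2)
  have hsplit2 := Finset.sum_filter_add_sum_filter_not
    (Finset.univ.filter (fun p : Fin n × Fin n => ¬ p.1 < p.2))
    (fun p : Fin n × Fin n => p.2 < p.1) (fun p => κ p.1 * κ p.2)
  rw [Finset.filter_filter, Finset.filter_filter] at hsplit2
  have h1 : (Finset.univ.filter (fun p : Fin n × Fin n => ¬ p.1 < p.2 ∧ p.2 < p.1))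
      = Finset.univ.filter (fun p : Fin n × Fin n => p.2 < p.1) := by
    apply Finset.filter_congr
    intro p _
    constructor
    · rintro ⟨_, h⟩; exact h
    · intro h; exact ⟨not_lt_of_gt h, h⟩
  have h2 : (Finset.univ.filter (fun p : Fin n × Fin n => ¬ p.1 < p.2 ∧ ¬ p.2 < p.1))
      = Finset.univ.filter (fun p : Fin n × Fin n => p.1 = p.2) := by
    apply Finset.filter_congr
    intro p _
    constructor
    · rintro ⟨h, h'⟩; exact le_antisymm (not_lt.mp h') (not_lt.mp h)
    · intro h; exact ⟨by omega, by omega⟩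
  rw [h1, h2] at hsplit2
  have hswap : ∑ p ∈ univ.filter (fun p : Fin n × Fin n => p.2 < p.1), κ p.1 * κ p.2
      = ∑ p ∈ univ.filter (fun p : Fin n × Fin n => p.1 < p.2), κ p.1 * κ p.2 := by
    apply Finset.sum_nbij' (i := Prod.swap) (j := Prod.swap) <;> simp [mul_comm]
  have hdiag : ∑ p ∈ univ.filter (fun p : Fin n × Fin n => p.1 = p.2), κ p.1 * κ p.2
      = ∑ j, (κ j) ^ 2 := by
    apply Finset.sum_nbij' (i := fun p => p.1) (j := fun j => (j, j)) <;>
      simp +contextual [sq]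
  rw [hswap, hdiag] at hsplit2
  rw [hsq, ← hsplit, ← hsplit2]
  ring

/-- Huang–Wu algebraic inequality: for κ ∈ ℝⁿ (n ≥ 2), H = Σⱼ κⱼ,
K = Σ_{j<k} κⱼκₖ and λᵢ = H − κᵢ, one has H·λᵢ ≥ K + (n/(2(n-1))) λᵢ². -/
theorem huang_wu_inequality (n : ℕ) (hn : 2 ≤ n) (κ : Fin n → ℝ) (i : Fin n) :
    (∑ j, κ j) * ((∑ j, κ j) - κ i) ≥
      (∑ p ∈ univ.filter (fun p : Fin n × Fin n => p.1 < p.2), κ p.1 * κ p.2)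
        + ((n : ℝ) / (2 * ((n : ℝ) - 1))) * ((∑ j, κ j) - κ i) ^ 2 := by
  have hnR : (2 : ℝ) ≤ (n : ℝ) := by exact_mod_cast hn
  set H : ℝ := ∑ j, κ j with hH
  set K : ℝ := ∑ p ∈ univ.filter (fun p : Fin n × Fin n => p.1 < p.2), κ p.1 * κ p.2 with hK
  set Q : ℝ := ∑ j ∈ univ.erase i, (κ j) ^ 2 with hQ
  have hid : 2 * K + (Q + (κ i) ^ 2) = H ^ 2 := by
    have := huang_wu_pair_sum n κ
    rwa [← Finset.sum_erase_add _ _ (Finset.mem_univ i)] at this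
  have hlam : H - κ i = ∑ j ∈ univ.erase i, κ j := by
    rw [hH, ← Finset.sum_erase_add _ _ (Finset.mem_univ i)]
    ring
  have hcauchy : (H - κ i) ^ 2 ≤ ((n : ℝ) - 1) * Q := by
    have := sq_sum_le_card_mul_sum_sq (s := univ.erase i) (f := κ)
    rw [Finset.card_erase_of_mem (Finset.mem_univ i), Finset.card_univ, Fintype.card_fin] at this
    rw [hlam]
    have hc : ((n - 1 : ℕ) : ℝ) = (n : ℝ) - 1 := by
      have : (1:ℕ) ≤ n := by omega
      push_cast [this]; ring
    calc (∑ j ∈ univ.erase i, κ j) ^ 2 ≤ ((n - 1 : ℕ) : ℝ) * ∑ j ∈ univ.erase i, (κ j) ^ 2 := this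
      _ = ((n : ℝ) - 1) * Q := by rw [hc]
  have hpos : (0 : ℝ) < 2 * ((n : ℝ) - 1) := by linarith
  rw [ge_iff_le, ← sub_nonneg]
  have key : (n : ℝ) / (2 * ((n : ℝ) - 1)) * (H - κ i) ^ 2 ≤ (H - κ i) ^ 2 / 2 + Q / 2 := by
    rw [div_mul_eq_mul_div, div_le_iff₀ hpos]
    nlinarith [sq_nonneg (H - κ i), hcauchy]
  nlinarith [key, hid]
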